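/- Let K be a field of characteristic zero and let D = ∂_{x_1} + (a_2·x_2 + b_2)·∂_{x_2} + b_3·∂_{x_3} be the K-derivation of K[x_1,x_2,x_3] with a_2, b_2 ∈ K[x_1] and b_3 ∈ K[x_1,x_2], and set u = deg_{x_2} b_3. If D is a simple derivation, then x_2^{u+1} does not belong to Im D = D(K[x_1,x_2,x_3]); that is, there is no f ∈ K[x_1,x_2,x_3] with D(f) = x_2^{u+1}. -/

import Mathlib

set_option linter.unusedSectionVars false
set_option maxHeartbeats 1000000


open MvPolynomial

/-- A `K`-subspace `M` of `R` is a Mathieu–Zhao space if for all `a, b ∈ R` such that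
`a ^ m ∈ M` for all `m ≥ 1`, there exists `N` such that `b * a ^ m ∈ M` for all `m ≥ N`. -/
def IsMathieuZhao (K : Type*) {R : Type*} [Field K] [CommRing R] [Algebra K R]
    (M : Submodule K R) : Prop :=
  ∀ a b : R, (∀ m : ℕ, 1 ≤ m → a ^ m ∈ M) →
    ∃ N : ℕ, ∀ m : ℕ, N ≤ m → b * a ^ m ∈ M

/-- A `K`-derivation `D` of `R` is simple if the only ideals `I` of `R` with `D(I) ⊆ I`
are `0` and `R`. -/
def Derivation.IsSimple {K R : Type*} [CommRing K] [CommRing R] [Algebra K R]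
    (D : Derivation K R R) : Prop :=
  ∀ I : Ideal R, (∀ a ∈ I, D a ∈ I) → I = ⊥ ∨ I = ⊤

section Helpers
open Polynomial

variable {K : Type*} [Field K] [CharZero K]

noncomputable abbrev SS (K : Type*) [Field K] := Polynomial (Polynomial K)




noncomputable def psi3 (K : Type*) [Field K] : MvPolynomial (Fin 3) K →ₐ[K] SS K :=
  aeval ![Polynomial.C Polynomial.X, Polynomial.X, 0]

noncomputable def phi3 (K : Type*) [Field K] : SS K →+* MvPolynomial (Fin 3) K :=
  Polynomial.eval₂RingHom (Polynomial.aeval (X 0 : MvPolynomial (Fin 3) K)).toRingHom (X 1)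

@[simp] lemma psi3_X0 : psi3 K (X 0) = Polynomial.C Polynomial.X := by
  simp [psi3]
@[simp] lemma psi3_X1 : psi3 K (X 1) = Polynomial.X := by
  simp [psi3]
@[simp] lemma psi3_X2 : psi3 K (X 2) = 0 := by
  simp [psi3]

@[simp] lemma phi3_C (q : Polynomial K) : phi3 K (Polynomial.C q) = Polynomial.aeval (X 0 : MvPolynomial (Fin 3) K) q := by
  simp [phi3]
@[simp] lemma phi3_X : phi3 K (Polynomial.X) = X 1 := by
  simp [phi3]



/-- inner derivative: apply `derivative` to each coefficient. -/
noncomputable def idel (q : SS K) : SS K :=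
  q.sum fun n a => Polynomial.C (derivative a) * Polynomial.X ^ n

@[simp] lemma coeff_idel (q : SS K) (n : ℕ) :
    (idel q).coeff n = derivative (q.coeff n) := by
  classical
  rw [idel, Polynomial.sum, Polynomial.finset_sum_coeff]
  simp only [Polynomial.coeff_C_mul, Polynomial.coeff_X_pow, mul_ite, mul_one, mul_zero]
  rw [Finset.sum_ite_eq q.support n (fun m => derivative (q.coeff m))]
  split_ifs with h
  · rfl
  · simp [Polynomial.notMem_support_iff.mp h]

lemma idel_add (q r : SS K) : idel (q + r) = idel q + idel r := by
  ext n; simp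

lemma idel_mul (q r : SS K) : idel (q * r) = idel q * r + q * idel r := by
  refine Polynomial.ext fun n => ?_
  simp only [coeff_idel, Polynomial.coeff_mul, Polynomial.coeff_add, map_sum,
    Polynomial.finset_sum_coeff]
  rw [← Finset.sum_add_distrib]
  refine Finset.sum_congr rfl fun x _ => ?_
  simp [Polynomial.derivative_mul]

@[simp] lemma idel_C (a : Polynomial K) : idel (Polynomial.C a : SS K) = Polynomial.C (derivative a) := by
  ext n
  rcases n with _ | n <;> simp [Polynomial.coeff_C]

@[simp] lemma idel_X : idel (Polynomial.X : SS K) = 0 := by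
  ext n
  rcases n with _ | n
  · simp
  · rcases n with _ | n <;> simp [Polynomial.coeff_X]

-- aeval at (C X) is C
lemma aeval_CX (a : Polynomial K) : Polynomial.aeval (Polynomial.C Polynomial.X : SS K) a = Polynomial.C a := by
  induction a using Polynomial.induction_on with
  | C k => simp [Polynomial.algebraMap_apply]
  | add p q hp hq => simp [hp, hq]
  | monomial n k h => rw [pow_succ, ← mul_assoc, map_mul, h, Polynomial.aeval_X, ← map_mul]

lemma psi_phi (q : SS K) : psi3 K (phi3 K q) = q := by
  induction q using Polynomial.induction_on with
  | C a =>
      rw [phi3_C, ← Polynomial.aeval_algHom_apply (psi3 K) (X 0) a, psi3_X0, aeval_CX]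
  | add p q hp hq => simp [map_add, hp, hq]
  | monomial n a h =>
      rw [pow_succ, ← mul_assoc, map_mul, map_mul, h, phi3_X, psi3_X1]

lemma phi_psi {p : MvPolynomial (Fin 3) K} (hp : p ∈ supported K ({0, 1} : Set (Fin 3))) :
    phi3 K (psi3 K p) = p := by
  refine Algebra.adjoin_induction ?_ ?_ ?_ ?_ hp
  · rintro x ⟨i, hi, rfl⟩
    rcases hi with rfl | rfl
    · rw [psi3_X0, phi3_C, Polynomial.aeval_X]
    · rw [psi3_X1, phi3_X]
  · intro k
    rw [AlgHom.commutes]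
    simp [Polynomial.algebraMap_apply, MvPolynomial.algebraMap_eq]
  · intro x y _ _ hx hy; rw [map_add, map_add, hx, hy]
  · intro x y _ _ hx hy; rw [map_mul, map_mul, hx, hy]

lemma phi_mem_supported (q : SS K) : phi3 K q ∈ supported K ({0, 1} : Set (Fin 3)) := by
  induction q using Polynomial.induction_on with
  | C a =>
      rw [phi3_C]
      have : Polynomial.aeval (X 0 : MvPolynomial (Fin 3) K) a ∈ Algebra.adjoin K {X 0} := by
        rw [Algebra.adjoin_singleton_eq_range_aeval]
        exact ⟨a, rfl⟩
      refine Algebra.adjoin_mono ?_ this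
      rintro x rfl
      exact ⟨0, by simp, rfl⟩
  | add p q hp hq => rw [map_add]; exact Subalgebra.add_mem _ hp hq
  | monomial n a h =>
      rw [pow_succ, ← mul_assoc, map_mul]
      exact Subalgebra.mul_mem _ h (by rw [phi3_X]; exact X_mem_supported.mpr (by simp))

noncomputable def fs (α n : ℕ) : Fin 3 →₀ ℕ :=
  Finsupp.single (0 : Fin 3) α + Finsupp.single 1 n

@[simp] lemma fs_apply0 (α n : ℕ) : fs α n 0 = α := by simp [fs]
@[simp] lemma fs_apply1 (α n : ℕ) : fs α n 1 = n := by simp [fs]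
@[simp] lemma fs_apply2 (α n : ℕ) : fs α n 2 = 0 := by simp [fs, Finsupp.single_apply]

lemma fs_eq_iff {α n β m : ℕ} : fs α n = fs β m ↔ α = β ∧ n = m := by
  constructor
  · intro h
    constructor
    · rw [← fs_apply0 α n, h, fs_apply0]
    · rw [← fs_apply1 α n, h, fs_apply1]
  · rintro ⟨rfl, rfl⟩; rfl

lemma X_pow_mul_eq_monomial (m j : ℕ) :
    (X 0 : MvPolynomial (Fin 3) K) ^ m * X 1 ^ j = monomial (fs m j) 1 := by
  rw [MvPolynomial.X_pow_eq_monomial, MvPolynomial.X_pow_eq_monomial, monomial_mul, one_mul]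
  rfl

lemma coeff_phi (q : SS K) (α n : ℕ) :
    MvPolynomial.coeff (fs α n) (phi3 K q) = Polynomial.coeff (Polynomial.coeff q n) α := by
  induction q using Polynomial.induction_on' with
  | add p q hp hq => simp [map_add, hp, hq]
  | monomial j a =>
      rw [← Polynomial.C_mul_X_pow_eq_monomial, map_mul, map_pow, phi3_C, phi3_X]
      induction a using Polynomial.induction_on' with
      | add p q hp hq => simp only [map_add, add_mul, map_add] at *; simp [hp, hq]
      | monomial m k =>
          rw [← Polynomial.C_mul_X_pow_eq_monomial, map_mul, map_pow, Polynomial.aeval_C,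
            Polynomial.aeval_X]
          have h1 : (algebraMap K (MvPolynomial (Fin 3) K)) k * (X 0 : MvPolynomial (Fin 3) K) ^ m * X 1 ^ j
              = monomial (fs m j) k := by
            rw [mul_assoc, X_pow_mul_eq_monomial, MvPolynomial.algebraMap_eq,
              MvPolynomial.C_mul_monomial, mul_one]
          have h2 : (Polynomial.C (Polynomial.C k * Polynomial.X ^ m) * Polynomial.X ^ j : SS K)
              = Polynomial.monomial j (Polynomial.monomial m k) := by
            rw [Polynomial.C_mul_X_pow_eq_monomial (a := k), Polynomial.C_mul_X_pow_eq_monomial]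
          rw [h1, h2, MvPolynomial.coeff_monomial, Polynomial.coeff_monomial]
          by_cases hj : j = n
          · subst hj
            rw [if_pos rfl, Polynomial.coeff_monomial]
            by_cases hm : m = α
            · subst hm
              rw [if_pos (fs_eq_iff.mpr ⟨rfl, rfl⟩), if_pos rfl]
            · rw [if_neg hm, if_neg (fun h => hm (fs_eq_iff.mp h).1)]
          · rw [if_neg hj, if_neg (fun h => hj (fs_eq_iff.mp h).2), Polynomial.coeff_zero]

lemma coeff_pderiv (i : Fin 3) (m : Fin 3 →₀ ℕ) (p : MvPolynomial (Fin 3) K) :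
    MvPolynomial.coeff m (pderiv i p) = (m i + 1 : ℕ) * MvPolynomial.coeff (m + Finsupp.single i 1) p := by
  induction p using MvPolynomial.induction_on' with
  | add p q hp hq => simp [map_add, hp, hq, mul_add]
  | monomial s a =>
      rw [pderiv_monomial, MvPolynomial.coeff_monomial, MvPolynomial.coeff_monomial]
      by_cases hs : s i = 0
      · have h1 : ¬ s = m + Finsupp.single i 1 := by
          intro h
          apply absurd hs
          rw [h]; simp
        rw [if_neg h1, mul_zero]
        split_ifs with h
        · rw [hs, Nat.cast_zero, mul_zero]
        · rfl
      · have hle : Finsupp.single i 1 ≤ s := by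
          rw [Finsupp.single_le_iff]
          omega
        have h2 : s - Finsupp.single i 1 = m ↔ s = m + Finsupp.single i 1 :=
          tsub_eq_iff_eq_add_of_le hle
        by_cases h : s - Finsupp.single i 1 = m
        · rw [if_pos h, if_pos (h2.mp h)]
          have : s i = m i + 1 := by
            rw [h2.mp h]; simp
          rw [this]
          ring
        · rw [if_neg h, if_neg (fun hh => h (h2.mpr hh)), mul_zero]

lemma pderiv_comm (i j : Fin 3) (p : MvPolynomial (Fin 3) K) :
    pderiv i (pderiv j p) = pderiv j (pderiv i p) := by
  by_cases hij : i = j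
  · subst hij; rfl
  refine MvPolynomial.ext _ _ fun m => ?_
  rw [_root_.coeff_pderiv, _root_.coeff_pderiv, _root_.coeff_pderiv, _root_.coeff_pderiv]
  have e1 : ((m + Finsupp.single i 1 : Fin 3 →₀ ℕ)) j = m j := by
    rw [Finsupp.add_apply, Finsupp.single_apply, if_neg hij, add_zero]
  have e2 : ((m + Finsupp.single j 1 : Fin 3 →₀ ℕ)) i = m i := by
    rw [Finsupp.add_apply, Finsupp.single_apply, if_neg (Ne.symm hij), add_zero]
  rw [e1, e2, add_assoc, add_assoc, add_comm (Finsupp.single i 1)]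
  ring

lemma pderiv_eq_zero_of_supported {p : MvPolynomial (Fin 3) K} {s : Set (Fin 3)}
    (hp : p ∈ supported K s) {i : Fin 3} (hi : i ∉ s) : pderiv i p = 0 := by
  refine Algebra.adjoin_induction ?_ ?_ ?_ ?_ hp
  · rintro x ⟨j, hj, rfl⟩
    exact pderiv_X_of_ne (fun h => hi (h ▸ hj))
  · intro k
    rw [MvPolynomial.algebraMap_eq, pderiv_C]
  · intro x y _ _ hx hy; rw [map_add, hx, hy, add_zero]
  · intro x y _ _ hx hy
    rw [Derivation.leibniz, hx, hy]; simp

lemma mem_supported_of_pderiv2_eq_zero {p : MvPolynomial (Fin 3) K}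
    (hp : pderiv 2 p = 0) : p ∈ supported K ({0, 1} : Set (Fin 3)) := by
  rw [MvPolynomial.mem_supported]
  intro i hi
  rw [Finset.mem_coe, MvPolynomial.mem_vars] at hi
  obtain ⟨d, hd, hid⟩ := hi
  rcases hid with hid
  by_contra hns
  have hi2 : i = 2 := by
    fin_cases i <;> simp_all
  subst hi2
  have h2 : d 2 ≠ 0 := Finsupp.mem_support_iff.mp hid
  have hle : Finsupp.single (2 : Fin 3) 1 ≤ d := by
    rw [Finsupp.single_le_iff]; omega
  have := coeff_pderiv (K := K) 2 (d - Finsupp.single 2 1) p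
  rw [hp, MvPolynomial.coeff_zero, tsub_add_cancel_of_le hle] at this
  have hd2 : ((d - Finsupp.single 2 1 : Fin 3 →₀ ℕ)) 2 + 1 ≠ 0 := by
    simp
  have : MvPolynomial.coeff d p = 0 := by
    field_simp at this
    rcases mul_eq_zero.mp this.symm with h | h
    · exact absurd (Nat.cast_eq_zero.mp h) hd2
    · exact h
  exact Finsupp.mem_support_iff.mp hd this

lemma aeval_X0_monomial (n : ℕ) (k : K) :
    Polynomial.aeval (X 0 : MvPolynomial (Fin 3) K) (Polynomial.monomial n k)
      = monomial (Finsupp.single (0 : Fin 3) n) k := by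
  rw [← Polynomial.C_mul_X_pow_eq_monomial, map_mul, map_pow, Polynomial.aeval_C,
    Polynomial.aeval_X, MvPolynomial.X_pow_eq_monomial, MvPolynomial.algebraMap_eq,
    MvPolynomial.C_mul_monomial, mul_one]

lemma aeval_X0_supported (a : Polynomial K) :
    Polynomial.aeval (X 0 : MvPolynomial (Fin 3) K) a ∈ supported K ({0} : Set (Fin 3)) := by
  have h : Polynomial.aeval (X 0 : MvPolynomial (Fin 3) K) a ∈ Algebra.adjoin K {X 0} := by
    rw [Algebra.adjoin_singleton_eq_range_aeval]
    exact ⟨a, rfl⟩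
  refine Algebra.adjoin_mono ?_ h
  rintro x rfl
  exact ⟨0, rfl, rfl⟩

lemma pderiv0_aeval (a : Polynomial K) :
    pderiv 0 (Polynomial.aeval (X 0 : MvPolynomial (Fin 3) K) a)
      = Polynomial.aeval (X 0 : MvPolynomial (Fin 3) K) (derivative a) := by
  induction a using Polynomial.induction_on' with
  | add p q hp hq => simp [map_add, hp, hq]
  | monomial n k =>
      rw [aeval_X0_monomial, pderiv_monomial, Polynomial.derivative_monomial, aeval_X0_monomial,
        Finsupp.single_eq_same, ← Finsupp.single_tsub]

lemma phi3_monomial (j : ℕ) (a : Polynomial K) :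
    phi3 K (Polynomial.monomial j a)
      = Polynomial.aeval (X 0 : MvPolynomial (Fin 3) K) a * X 1 ^ j := by
  rw [← Polynomial.C_mul_X_pow_eq_monomial, map_mul, map_pow, phi3_C, phi3_X]

lemma pderiv1_X1pow (j : ℕ) :
    pderiv 1 ((X 1 : MvPolynomial (Fin 3) K) ^ j) = (j : MvPolynomial (Fin 3) K) * X 1 ^ (j - 1) := by
  rw [MvPolynomial.X_pow_eq_monomial, pderiv_monomial, Finsupp.single_eq_same, one_mul,
    ← Finsupp.single_tsub]
  rw [MvPolynomial.X_pow_eq_monomial,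
    show ((j:ℕ) : MvPolynomial (Fin 3) K) = MvPolynomial.C ((j:ℕ) : K) by simp,
    MvPolynomial.C_mul_monomial, mul_one]

lemma pderiv1_phi (q : SS K) : pderiv 1 (phi3 K q) = phi3 K (derivative q) := by
  induction q using Polynomial.induction_on' with
  | add p q hp hq => simp [map_add, hp, hq]
  | monomial j a =>
      rw [phi3_monomial, Derivation.leibniz, Polynomial.derivative_monomial, phi3_monomial,
        pderiv_eq_zero_of_supported (aeval_X0_supported a) (by simp : (1:Fin 3) ∉ ({0}:Set (Fin 3))),
        pderiv1_X1pow]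
      simp only [smul_eq_mul, smul_zero, mul_zero, add_zero, zero_add, zero_mul, map_mul]
      rw [show Polynomial.aeval (X 0 : MvPolynomial (Fin 3) K) ((j : Polynomial K))
          = (j : MvPolynomial (Fin 3) K) by simp]
      ring

lemma pderiv0_phi (q : SS K) : pderiv 0 (phi3 K q) = phi3 K (idel q) := by
  induction q using Polynomial.induction_on' with
  | add p q hp hq => rw [map_add, map_add, hp, hq, idel_add, map_add]
  | monomial j a =>
      have hidel : idel (Polynomial.monomial j a) = Polynomial.monomial j (derivative a) := by
        refine Polynomial.ext fun n => ?_
        rw [coeff_idel, Polynomial.coeff_monomial, Polynomial.coeff_monomial]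
        split_ifs <;> simp
      have hX1j : pderiv 0 ((X 1 : MvPolynomial (Fin 3) K) ^ j) = 0 := by
        rw [Derivation.leibniz_pow, pderiv_X_of_ne (by decide), smul_zero, smul_zero]
      rw [phi3_monomial, Derivation.leibniz, hidel, phi3_monomial, pderiv0_aeval, hX1j]
      simp only [smul_eq_mul, smul_zero, mul_zero, zero_add, add_zero]
      ring

lemma psi3_supported0 {p : MvPolynomial (Fin 3) K} (hp : p ∈ supported K ({0} : Set (Fin 3))) :
    ∃ a : Polynomial K, psi3 K p = Polynomial.C a := by
  refine Algebra.adjoin_induction ?_ ?_ ?_ ?_ hp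
  · rintro x ⟨i, hi, rfl⟩
    rcases hi with rfl
    exact ⟨Polynomial.X, psi3_X0⟩
  · intro k
    refine ⟨Polynomial.C k, ?_⟩
    rw [AlgHom.commutes]
    simp [Polynomial.algebraMap_apply]
  · rintro x y _ _ ⟨a, ha⟩ ⟨b, hb⟩
    exact ⟨a + b, by rw [map_add, ha, hb, map_add]⟩
  · rintro x y _ _ ⟨a, ha⟩ ⟨b, hb⟩
    exact ⟨a * b, by rw [map_mul, ha, hb, map_mul]⟩

lemma natDegree_psi3_le {p : MvPolynomial (Fin 3) K}
    (hp : p ∈ supported K ({0, 1} : Set (Fin 3))) :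
    (psi3 K p).natDegree ≤ degreeOf 1 p := by
  by_contra hcon
  push_neg at hcon
  set n := (psi3 K p).natDegree with hn
  have hne : psi3 K p ≠ 0 := by
    intro h0
    rw [h0, Polynomial.natDegree_zero] at hn
    omega
  have hlc : (psi3 K p).coeff n ≠ 0 := by
    rw [hn]
    exact Polynomial.leadingCoeff_ne_zero.mpr hne
  obtain ⟨α, hα⟩ : ∃ α, ((psi3 K p).coeff n).coeff α ≠ 0 := by
    by_contra hall
    push_neg at hall
    exact hlc (Polynomial.ext fun α => by rw [hall α, Polynomial.coeff_zero])
  have hco : MvPolynomial.coeff (fs α n) p ≠ 0 := by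
    rw [← phi_psi hp, coeff_phi]
    exact hα
  have hmem : fs α n ∈ p.support := MvPolynomial.mem_support_iff.mpr hco
  have : n ≤ degreeOf 1 p := by
    rw [MvPolynomial.degreeOf_eq_sup]
    have := Finset.le_sup (f := fun m : Fin 3 →₀ ℕ => m 1) hmem
    simpa using this
  omega

lemma poly_antideriv (t : Polynomial K) : ∃ B : Polynomial K, derivative B = t := by
  refine ⟨t.sum fun n a => Polynomial.C (a / ((n : K) + 1)) * Polynomial.X ^ (n + 1), ?_⟩
  rw [Polynomial.sum, map_sum]
  have step : ∀ n ∈ t.support,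
      derivative (Polynomial.C (t.coeff n / ((n : K) + 1)) * Polynomial.X ^ (n + 1))
        = Polynomial.monomial n (t.coeff n) := by
    intro n _
    rw [Polynomial.derivative_C_mul_X_pow]
    have h1 : (t.coeff n / ((n : K) + 1)) * ((n : K) + 1) = t.coeff n := by
      rw [div_mul_cancel₀]
      exact Nat.cast_add_one_ne_zero n
    rw [Nat.add_sub_cancel]
    rw [show ((n + 1 : ℕ) : K) = (n : K) + 1 by push_cast; ring, h1,
      Polynomial.C_mul_X_pow_eq_monomial]
  rw [Finset.sum_congr rfl step, ← Polynomial.as_sum_support]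

lemma ode_solve (α : K) (t : Polynomial K) :
    ∃ B : Polynomial K, derivative B = Polynomial.C α * B + t := by
  rcases eq_or_ne α 0 with rfl | hα
  · obtain ⟨B, hB⟩ := poly_antideriv t
    exact ⟨B, by rw [hB]; simp⟩
  · set N := t.natDegree
    refine ⟨-∑ k ∈ Finset.range (N + 2), Polynomial.C (α⁻¹ ^ (k + 1)) * derivative^[k] t, ?_⟩
    rw [map_neg, map_sum]
    have e1 : ∀ k, derivative (Polynomial.C (α⁻¹ ^ (k + 1)) * derivative^[k] t)
        = Polynomial.C (α⁻¹ ^ (k + 1)) * derivative^[k + 1] t := by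
      intro k
      rw [Polynomial.derivative_C_mul, Function.iterate_succ_apply']
    simp_rw [e1]
    have e2 : Polynomial.C α * -∑ k ∈ Finset.range (N + 2),
        Polynomial.C (α⁻¹ ^ (k + 1)) * derivative^[k] t
        = -∑ k ∈ Finset.range (N + 2), Polynomial.C (α⁻¹ ^ k) * derivative^[k] t := by
      rw [mul_neg, Finset.mul_sum]
      congr 1
      refine Finset.sum_congr rfl fun k _ => ?_
      rw [← mul_assoc, ← map_mul]
      congr 2
      rw [pow_succ, mul_comm, mul_assoc, inv_mul_cancel₀ hα, mul_one]
    rw [e2]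
    rw [Finset.sum_range_succ' (fun k => Polynomial.C (α⁻¹ ^ k) * derivative^[k] t) (N + 1)]
    rw [Finset.sum_range_succ (fun k => Polynomial.C (α⁻¹ ^ (k + 1)) * derivative^[k + 1] t) (N + 1)]
    rw [Polynomial.iterate_derivative_eq_zero (by omega : t.natDegree < N + 1 + 1)]
    simp

end Helpers

open Polynomial

/-- For `D = ∂_{x₁} + (a₂ x₂ + b₂) ∂_{x₂} + b₃ ∂_{x₃}` with
`a₂, b₂ ∈ K[x₁]`, `b₃ ∈ K[x₁, x₂]` and `u = deg_{x₂} b₃`: if `D` is simple,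
then `x₂^(u+1) ∉ Im D`. -/
theorem statement16 (K : Type*) [Field K] [CharZero K]
    (a2 b2 b3 : MvPolynomial (Fin 3) K)
    (ha2 : a2 ∈ supported K ({0} : Set (Fin 3)))
    (hb2 : b2 ∈ supported K ({0} : Set (Fin 3)))
    (hb3 : b3 ∈ supported K ({0, 1} : Set (Fin 3)))
    (u : ℕ) (hu : u = degreeOf (1 : Fin 3) b3)
    (D : Derivation K (MvPolynomial (Fin 3) K) (MvPolynomial (Fin 3) K))
    (hD1 : D (X 0) = 1)
    (hD2 : D (X 1) = a2 * X 1 + b2)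
    (hD3 : D (X 2) = b3)
    (hD : Derivation.IsSimple D) :
    ¬ ∃ f : MvPolynomial (Fin 3) K, D f = X 1 ^ (u + 1) := by
  rintro ⟨f, hf⟩
  -- the formula for D
  have hDform : ∀ q, D q = pderiv 0 q + (a2 * X 1 + b2) * pderiv 1 q + b3 * pderiv 2 q := by
    have hE : D = pderiv 0 + (a2 * X 1 + b2) • pderiv 1 + b3 • pderiv 2 := by
      apply MvPolynomial.derivation_ext
      intro i
      fin_cases i
      · simpa [pderiv_X_self, pderiv_X_of_ne] using hD1
      · simpa [pderiv_X_self, pderiv_X_of_ne] using hD2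
      · simpa [pderiv_X_self, pderiv_X_of_ne] using hD3
    intro q
    rw [hE]
    simp [smul_eq_mul]
  -- kernel of D consists of constants
  have hker : ∀ h : MvPolynomial (Fin 3) K, D h = 0 → h = MvPolynomial.C (MvPolynomial.constantCoeff h) := by
    intro h hh
    set w := h - MvPolynomial.C (MvPolynomial.constantCoeff h) with hw
    have hDC : D (MvPolynomial.C (MvPolynomial.constantCoeff h)) = 0 := by
      rw [← MvPolynomial.algebraMap_eq, Derivation.map_algebraMap]
    have hDw : D w = 0 := by rw [hw, map_sub, hh, hDC, sub_zero]
    have hst : ∀ a ∈ Ideal.span {w}, D a ∈ Ideal.span {w} := by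
      intro a ha
      rw [Ideal.mem_span_singleton] at ha ⊢
      obtain ⟨r, rfl⟩ := ha
      rw [Derivation.leibniz, hDw, smul_zero, add_zero, smul_eq_mul]
      exact Dvd.intro _ rfl
    rcases hD _ hst with hbot | htop
    · have hw0 : w = 0 := by
        rw [← Ideal.span_singleton_eq_bot]
        exact hbot
      rw [hw] at hw0
      exact sub_eq_zero.mp hw0
    · exfalso
      have h1 : (1 : MvPolynomial (Fin 3) K) ∈ Ideal.span {w} := by
        rw [htop]; trivial
      rw [Ideal.mem_span_singleton] at h1
      obtain ⟨r, hr⟩ := h1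
      have := congrArg MvPolynomial.constantCoeff hr
      rw [map_one, map_mul] at this
      have hcw : MvPolynomial.constantCoeff w = 0 := by
        rw [hw, map_sub, MvPolynomial.constantCoeff_C, sub_self]
      rw [hcw, zero_mul] at this
      exact one_ne_zero this
  -- pderiv 2 of the coefficients vanishes
  have h2a : pderiv 2 a2 = 0 := pderiv_eq_zero_of_supported ha2 (by simp)
  have h2b : pderiv 2 b2 = 0 := pderiv_eq_zero_of_supported hb2 (by simp)
  have h2c : pderiv 2 b3 = 0 := pderiv_eq_zero_of_supported hb3 (by simp)
  -- D commutes with pderiv 2 on f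
  have hcomm : D (pderiv 2 f) = 0 := by
    have e : pderiv 2 (D f) = D (pderiv 2 f) := by
      rw [hDform f, hDform (pderiv 2 f)]
      rw [map_add, map_add, Derivation.leibniz, Derivation.leibniz]
      rw [pderiv_comm 2 0, pderiv_comm 2 1]
      have hp2 : pderiv 2 (a2 * X 1 + b2) = 0 := by
        rw [map_add, Derivation.leibniz, h2a, h2b, pderiv_X_of_ne (by decide)]
        simp
      rw [hp2, h2c]
      simp only [smul_eq_mul, smul_zero, zero_smul, mul_zero, zero_mul, add_zero, zero_add,
        smul_eq_mul]
    have e2 : pderiv 2 ((X 1 : MvPolynomial (Fin 3) K) ^ (u + 1)) = 0 := by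
      rw [Derivation.leibniz_pow, pderiv_X_of_ne (by decide), smul_zero, smul_zero]
    rw [← e, hf, e2]
  have hc := hker _ hcomm
  set c := MvPolynomial.constantCoeff (pderiv 2 f) with hcdef
  set g := f - MvPolynomial.C c * X 2 with hgdef
  have hg2 : pderiv 2 g = 0 := by
    rw [hgdef, map_sub, hc, Derivation.leibniz, pderiv_X_self, pderiv_C]
    simp
  have hgsup : g ∈ supported K ({0, 1} : Set (Fin 3)) := mem_supported_of_pderiv2_eq_zero hg2
  have hDg : D g = X 1 ^ (u + 1) - MvPolynomial.C c * b3 := by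
    have hDCc : D (MvPolynomial.C c) = 0 := by
      rw [← MvPolynomial.algebraMap_eq, Derivation.map_algebraMap]
    rw [hgdef, map_sub, hf, Derivation.leibniz, hD3, hDCc]
    simp [smul_eq_mul]
  -- move to S = K[x][y]
  obtain ⟨A, hA⟩ := psi3_supported0 ha2
  obtain ⟨B2q, hB2q⟩ := psi3_supported0 hb2
  have hpsiC : ∀ k : K, psi3 K (MvPolynomial.C k) = Polynomial.C (Polynomial.C k) := by
    intro k
    rw [← MvPolynomial.algebraMap_eq, AlgHom.commutes]
    simp [Polynomial.algebraMap_apply]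
  have ha2phi : phi3 K (Polynomial.C A) = a2 := by
    rw [← hA]
    exact phi_psi (supported_mono (by simp) ha2)
  have hb2phi : phi3 K (Polynomial.C B2q) = b2 := by
    rw [← hB2q]
    exact phi_psi (supported_mono (by simp) hb2)
  set G := psi3 K g with hGdef
  set Gb := psi3 K b3 with hGbdef
  have hGb : Gb.natDegree ≤ u := by
    rw [hu]
    exact natDegree_psi3_le hb3
  have p0 : psi3 K (pderiv 0 g) = idel G := by
    rw [show pderiv 0 g = phi3 K (idel G) from by rw [← pderiv0_phi, phi_psi hgsup], psi_phi]
  have p1 : psi3 K (pderiv 1 g) = derivative G := by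
    rw [show pderiv 1 g = phi3 K (derivative G) from by rw [← pderiv1_phi, phi_psi hgsup], psi_phi]
  have heq : idel G + (Polynomial.C A * Polynomial.X + Polynomial.C B2q) * derivative G
      = Polynomial.X ^ (u + 1) - Polynomial.C (Polynomial.C c) * Gb := by
    have e1 : pderiv 0 g + (a2 * X 1 + b2) * pderiv 1 g
        = X 1 ^ (u + 1) - MvPolynomial.C c * b3 := by
      rw [← hDg, hDform g, hg2, mul_zero, add_zero]
    calc idel G + (Polynomial.C A * Polynomial.X + Polynomial.C B2q) * derivative G
        = psi3 K (pderiv 0 g + (a2 * X 1 + b2) * pderiv 1 g) := by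
          rw [map_add, map_mul, p0, p1, map_add, map_mul, hA, hB2q, psi3_X1]
      _ = psi3 K (X 1 ^ (u + 1) - MvPolynomial.C c * b3) := by rw [e1]
      _ = Polynomial.X ^ (u + 1) - Polynomial.C (Polynomial.C c) * Gb := by
          rw [map_sub, map_pow, map_mul, psi3_X1, hpsiC]
  -- a2 is not constant
  have hA1 : 1 ≤ A.natDegree := by
    by_contra hA0
    push_neg at hA0
    have hA00 : A.natDegree = 0 := by omega
    obtain ⟨α, hα⟩ := Polynomial.natDegree_eq_zero.mp hA00
    obtain ⟨Bq, hBq⟩ := ode_solve α B2q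
    set B := phi3 K (Polynomial.C Bq) with hBdef
    have hB0 : pderiv 0 B = phi3 K (Polynomial.C (derivative Bq)) := by
      rw [hBdef, pderiv0_phi, idel_C]
    have hB1 : pderiv 1 B = 0 := by
      rw [hBdef, pderiv1_phi, Polynomial.derivative_C, map_zero]
    have hB2 : pderiv 2 B = 0 :=
      pderiv_eq_zero_of_supported (phi_mem_supported _) (by simp)
    have ha2C : a2 = MvPolynomial.C α := by
      rw [← ha2phi, ← hα]
      simp [Polynomial.algebraMap_apply, MvPolynomial.algebraMap_eq]
    have hCCα : phi3 K (Polynomial.C (Polynomial.C α)) = MvPolynomial.C α := by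
      simp [Polynomial.algebraMap_apply, MvPolynomial.algebraMap_eq]
    have hDXB : D (X 1 - B) = MvPolynomial.C α * (X 1 - B) := by
      have hsplit : (Polynomial.C (Polynomial.C α * Bq + B2q) : SS K)
          = Polynomial.C (Polynomial.C α) * Polynomial.C Bq + Polynomial.C B2q := by
        rw [map_add, map_mul]
      rw [map_sub, hD2, hDform B, hB1, hB2, hB0, mul_zero, mul_zero, add_zero, add_zero, hBq,
        hsplit, map_add, map_mul, hCCα, hb2phi, ha2C, ← hBdef]
      ring
    have hst : ∀ a ∈ Ideal.span {X 1 - B}, D a ∈ Ideal.span {(X 1 : MvPolynomial (Fin 3) K) - B} := by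
      intro a ha
      rw [Ideal.mem_span_singleton] at ha ⊢
      obtain ⟨r, rfl⟩ := ha
      rw [Derivation.leibniz, hDXB, smul_eq_mul, smul_eq_mul]
      exact ⟨D r + r * MvPolynomial.C α, by ring⟩
    rcases hD _ hst with hbot | htop
    · have hXB : (X 1 : MvPolynomial (Fin 3) K) - B = 0 := by
        rw [← Ideal.span_singleton_eq_bot]
        exact hbot
      have := congrArg (pderiv 1) hXB
      rw [map_sub, pderiv_X_self, hB1, sub_zero, map_zero] at this
      exact one_ne_zero this
    · have h1 : (1 : MvPolynomial (Fin 3) K) ∈ Ideal.span {(X 1 : MvPolynomial (Fin 3) K) - B} := by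
        rw [htop]; trivial
      rw [Ideal.mem_span_singleton] at h1
      obtain ⟨r, hr⟩ := h1
      have := congrArg (psi3 K) hr
      rw [map_one, map_mul, map_sub, psi3_X1, hBdef, psi_phi] at this
      have := congrArg (Polynomial.eval Bq) this
      rw [Polynomial.eval_one, Polynomial.eval_mul, Polynomial.eval_sub, Polynomial.eval_X,
        Polynomial.eval_C] at this
      rw [sub_self, zero_mul] at this
      exact one_ne_zero this
  -- the final contradiction, in S
  have heq2 : idel G + Polynomial.C A * (Polynomial.X * derivative G)
      + Polynomial.C B2q * derivative G
      = Polynomial.X ^ (u + 1) - Polynomial.C (Polynomial.C c) * Gb := by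
    rw [← heq]; ring
  rcases lt_or_ge G.natDegree (u + 1) with hd | hd
  · -- low degree case
    have d1 : G.coeff (u + 1) = 0 := Polynomial.coeff_eq_zero_of_natDegree_lt hd
    have d2 : (derivative G).coeff u = 0 := by
      rw [Polynomial.coeff_derivative, d1, zero_mul]
    have d3 : (derivative G).coeff (u + 1) = 0 := by
      rw [Polynomial.coeff_derivative,
        Polynomial.coeff_eq_zero_of_natDegree_lt (by omega), zero_mul]
    have d4 : Gb.coeff (u + 1) = 0 := Polynomial.coeff_eq_zero_of_natDegree_lt (by omega)
    have hco : (idel G + Polynomial.C A * (Polynomial.X * derivative G)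
        + Polynomial.C B2q * derivative G).coeff (u + 1)
        = (Polynomial.X ^ (u + 1) - Polynomial.C (Polynomial.C c) * Gb).coeff (u + 1) := by
      rw [heq2]
    rw [Polynomial.coeff_add, Polynomial.coeff_add, Polynomial.coeff_sub, coeff_idel,
      Polynomial.coeff_C_mul, Polynomial.coeff_C_mul, Polynomial.coeff_C_mul,
      Polynomial.coeff_X_mul, d1, d2, d3, d4,
      Polynomial.coeff_X_pow, Polynomial.derivative_zero] at hco
    simp at hco
  · -- high degree case
    have hGne : G ≠ 0 := by
      intro h0
      rw [h0, Polynomial.natDegree_zero] at hd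
      omega
    have hL : G.coeff G.natDegree ≠ 0 := Polynomial.leadingCoeff_ne_zero.mpr hGne
    have c3 : (derivative G).coeff G.natDegree = 0 := by
      rw [Polynomial.coeff_derivative,
        Polynomial.coeff_eq_zero_of_natDegree_lt (by omega), zero_mul]
    have c4 : Gb.coeff G.natDegree = 0 := Polynomial.coeff_eq_zero_of_natDegree_lt (by omega)
    have hcast : ((G.natDegree - 1 : ℕ) : Polynomial K) + 1 = (G.natDegree : Polynomial K) := by
      rw [← Nat.cast_add_one]
      congr 1
      omega
    have c1 : (Polynomial.X * derivative G).coeff G.natDegree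
        = G.coeff G.natDegree * (G.natDegree : Polynomial K) := by
      conv_lhs => rw [show G.natDegree = (G.natDegree - 1) + 1 by omega]
      rw [Polynomial.coeff_X_mul, Polynomial.coeff_derivative,
        show G.natDegree - 1 + 1 = G.natDegree by omega, hcast]
    have hco : (idel G + Polynomial.C A * (Polynomial.X * derivative G)
        + Polynomial.C B2q * derivative G).coeff G.natDegree
        = (Polynomial.X ^ (u + 1) - Polynomial.C (Polynomial.C c) * Gb).coeff G.natDegree := by
      rw [heq2]
    rw [Polynomial.coeff_add, Polynomial.coeff_add, Polynomial.coeff_sub, coeff_idel,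
      Polynomial.coeff_C_mul, Polynomial.coeff_C_mul, Polynomial.coeff_C_mul,
      c1, c3, c4, Polynomial.coeff_X_pow,
      mul_zero, mul_zero, sub_zero, add_zero] at hco
    have hAne : A ≠ 0 := by
      intro h0
      rw [h0, Polynomial.natDegree_zero] at hA1
      omega
    have hdK : ((G.natDegree : ℕ) : Polynomial K) ≠ 0 := Nat.cast_ne_zero.mpr (by omega)
    have hMdeg : (A * (G.coeff G.natDegree * (G.natDegree : Polynomial K))).natDegree
        = A.natDegree + (G.coeff G.natDegree).natDegree := by
      rw [Polynomial.natDegree_mul hAne (mul_ne_zero hL hdK),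
        Polynomial.natDegree_mul hL hdK, Polynomial.natDegree_natCast, add_zero]
    have hder : (derivative (G.coeff G.natDegree)).natDegree
        < (A * (G.coeff G.natDegree * (G.natDegree : Polynomial K))).natDegree := by
      rw [hMdeg]
      rcases Nat.eq_zero_or_pos (G.coeff G.natDegree).natDegree with h0 | hpos
      · have hz : derivative (G.coeff G.natDegree) = 0 := by
          rw [Polynomial.eq_C_of_natDegree_eq_zero h0, Polynomial.derivative_C]
        rw [hz, Polynomial.natDegree_zero]
        omega
      · have := Polynomial.natDegree_derivative_lt
          (p := G.coeff G.natDegree) (by omega)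
        omega
    have hsum : (derivative (G.coeff G.natDegree)
        + A * (G.coeff G.natDegree * (G.natDegree : Polynomial K))).natDegree
        = A.natDegree + (G.coeff G.natDegree).natDegree := by
      rw [Polynomial.natDegree_add_eq_right_of_natDegree_lt hder, hMdeg]
    rw [hco] at hsum
    split_ifs at hsum with hif
    · rw [Polynomial.natDegree_one] at hsum
      omega
    · rw [Polynomial.natDegree_zero] at hsum
      omega
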